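/- arXiv:2402.11761 — 4 statements merged into one kernel-verified Lean document; each statement's English description precedes it below -/
import Mathlib

section
/- Let F be a number field of degree n over ℚ and J a nonzero ideal of 𝒪_F with absolute norm N = N_{F/ℚ}(J). Then ∏_{𝔭} (1 + v_𝔭(J)) ≤ d(N)^n, where the product is over all nonzero prime ideals 𝔭 of 𝒪_F, v_𝔭(J) is the exponent of 𝔭 in the factorization of J, and d(N) is the number of positive divisors of N. -/
open NumberField UniqueFactorizationMonoid

/-- In a commutative ring, if a natural number `k ≥ 2` lies in a prime ideal `P` (as a cast),
then some prime factor of `k` lies in `P`. -/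
lemma exists_prime_dvd_mem {R : Type*} [CommRing R] (P : Ideal R) (hP : P.IsPrime) :
    ∀ k : ℕ, 2 ≤ k → ((k : ℕ) : R) ∈ P → ∃ q : ℕ, q.Prime ∧ q ∣ k ∧ ((q : ℕ) : R) ∈ P := by
  intro k
  induction k using Nat.strong_induction_on with
  | _ k ih =>
    intro hk hkP
    have hq := Nat.minFac_prime (by omega : k ≠ 1)
    obtain ⟨m, hm⟩ := Nat.minFac_dvd k
    rw [hm, Nat.cast_mul] at hkP
    rcases hP.mem_or_mem hkP with h | h
    · exact ⟨k.minFac, hq, Nat.minFac_dvd k, h⟩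
    · have h2 := hq.two_le
      by_cases hm2 : 2 ≤ m
      · have hmk : m < k := by nlinarith [hm]
        obtain ⟨q, hq', hdvd, hmem⟩ := ih m hmk hm2 h
        exact ⟨q, hq', hdvd.trans (Dvd.intro_left _ hm.symm), hmem⟩
      · interval_cases m
        · omega
        · rw [Nat.cast_one] at h
          exact absurd (P.eq_top_iff_one.mpr h) hP.ne_top

open scoped Classical in
theorem prod_one_add_valuation_le_divisors_pow (F : Type*) [Field F] [NumberField F]
    (J : Ideal (𝓞 F)) (hJ : J ≠ 0) :
    ((normalizedFactors J).toFinset.prod fun P => 1 + (normalizedFactors J).count P)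
      ≤ (Nat.divisors (Ideal.absNorm J)).card ^ (Module.finrank ℚ F) := by
  classical
  set n := Module.finrank ℚ F with hn
  set N := Ideal.absNorm J with hNdef
  have hN : N ≠ 0 := by
    rw [hNdef, ne_eq, Ideal.absNorm_eq_zero_iff]
    simpa [Submodule.zero_eq_bot] using hJ
  set S := (normalizedFactors J).toFinset with hS
  -- basic facts about members of S
  have hSprime : ∀ P ∈ S, Prime P := fun P hP =>
    prime_of_normalized_factor P (Multiset.mem_toFinset.mp hP)
  have hSdvd : ∀ P ∈ S, P ∣ J := fun P hP =>
    dvd_of_mem_normalizedFactors (Multiset.mem_toFinset.mp hP)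
  have hSnorm : ∀ P ∈ S, 2 ≤ Ideal.absNorm P := by
    intro P hP
    have h0 : Ideal.absNorm P ≠ 0 := by
      rw [ne_eq, Ideal.absNorm_eq_zero_iff]
      simpa [Submodule.zero_eq_bot] using (hSprime P hP).ne_zero
    have h1 : Ideal.absNorm P ≠ 1 := by
      rw [ne_eq, Ideal.absNorm_eq_one_iff]
      exact (Ideal.isPrime_of_prime (hSprime P hP)).ne_top
    omega
  -- choose for each P a rational prime q with q ∣ N(P) and q ∈ P
  have key : ∀ P : Ideal (𝓞 F), ∃ q : ℕ, q.Prime ∧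
      (P ∈ S → q ∣ Ideal.absNorm P ∧ ((q : ℕ) : 𝓞 F) ∈ P) := by
    intro P
    by_cases hP : P ∈ S
    · obtain ⟨q, hq, hdvd, hmem⟩ := exists_prime_dvd_mem P
        (Ideal.isPrime_of_prime (hSprime P hP)) _ (hSnorm P hP) (Ideal.absNorm_mem P)
      exact ⟨q, hq, fun _ => ⟨hdvd, hmem⟩⟩
    · exact ⟨2, Nat.prime_two, fun h => absurd h hP⟩
  choose f hf1 hf2 using key
  -- P ∈ S implies f P is a prime factor of N
  have hfdvdN : ∀ P ∈ S, f P ∣ N := by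
    intro P hP
    exact ((hf2 P hP).1).trans (map_dvd Ideal.absNorm (hSdvd P hP))
  have hmaps : ∀ P ∈ S, f P ∈ N.primeFactors := fun P hP =>
    Nat.mem_primeFactors.mpr ⟨hf1 P, hfdvdN P hP, hN⟩
  -- Step 1 : 1 + count P ≤ 1 + v_{f P}(N)
  have step1 : ∀ P ∈ S, 1 + (normalizedFactors J).count P ≤ 1 + N.factorization (f P) := by
    intro P hP
    have hpow : P ^ (normalizedFactors J).count P ∣ J := by
      have hle : Multiset.replicate ((normalizedFactors J).count P) P ≤ normalizedFactors J :=
        Multiset.le_count_iff_replicate_le.mp le_rfl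
      have := Multiset.prod_dvd_prod_of_le hle
      rw [Multiset.prod_replicate] at this
      exact this.trans (prod_normalizedFactors hJ).dvd
    have hdvd : f P ^ (normalizedFactors J).count P ∣ N := by
      calc f P ^ (normalizedFactors J).count P
          ∣ Ideal.absNorm P ^ (normalizedFactors J).count P :=
            pow_dvd_pow_of_dvd (hf2 P hP).1 _
        _ = Ideal.absNorm (P ^ (normalizedFactors J).count P) := (map_pow Ideal.absNorm _ _).symm
        _ ∣ N := map_dvd Ideal.absNorm hpow
    have := ((hf1 P).pow_dvd_iff_le_factorization hN).mp hdvd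
    omega
  -- Step 2 : each fiber has at most n elements
  have fiber_card : ∀ q ∈ N.primeFactors, (S.filter (fun P => f P = q)).card ≤ n := by
    intro q hq
    have hqp : q.Prime := Nat.prime_of_mem_primeFactors hq
    set T := S.filter (fun P => f P = q) with hT
    have hTS : ∀ P ∈ T, P ∈ S := fun P hP => (Finset.mem_filter.mp hP).1
    have hTdvd : ∀ P ∈ T, P ∣ Ideal.span {((q : ℕ) : 𝓞 F)} := by
      intro P hP
      rw [Ideal.dvd_iff_le, Ideal.span_singleton_le_iff_mem]
      have := (hf2 P (hTS P hP)).2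
      rwa [(Finset.mem_filter.mp hP).2] at this
    have hprod : (∏ P ∈ T, P) ∣ Ideal.span {((q : ℕ) : 𝓞 F)} :=
      Finset.prod_primes_dvd _ (fun P hP => hSprime P (hTS P hP)) hTdvd
    have hnormspan : Ideal.absNorm (Ideal.span {((q : ℕ) : 𝓞 F)}) = q ^ n := by
      rw [Ideal.absNorm_span_singleton]
      have : ((q : ℕ) : 𝓞 F) = algebraMap ℤ (𝓞 F) (q : ℤ) := by
        simp
      rw [this, Algebra.norm_algebraMap_of_basis (Module.Free.chooseBasis ℤ (𝓞 F))]
      have hcard : Fintype.card (Module.Free.ChooseBasisIndex ℤ (𝓞 F)) = n := by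
        rw [← Module.finrank_eq_card_chooseBasisIndex, RingOfIntegers.rank]
      rw [hcard]
      simp [Int.natAbs_pow]
    have hdvdnorm : (∏ P ∈ T, Ideal.absNorm P) ∣ q ^ n := by
      rw [← hnormspan, ← map_prod]
      exact map_dvd Ideal.absNorm hprod
    have hle1 : q ^ T.card ≤ ∏ P ∈ T, Ideal.absNorm P := by
      apply Finset.pow_card_le_prod
      intro P hP
      have h := (hf2 P (hTS P hP)).1
      rw [(Finset.mem_filter.mp hP).2] at h
      exact Nat.le_of_dvd (by have := hSnorm P (hTS P hP); omega) h
    have hle2 : (∏ P ∈ T, Ideal.absNorm P) ≤ q ^ n :=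
      Nat.le_of_dvd (pow_pos hqp.pos n) hdvdnorm
    exact (Nat.pow_le_pow_iff_right hqp.one_lt).mp (hle1.trans hle2)
  -- assemble
  calc S.prod (fun P => 1 + (normalizedFactors J).count P)
      ≤ S.prod (fun P => 1 + N.factorization (f P)) := Finset.prod_le_prod' step1
    _ = ∏ q ∈ N.primeFactors, ∏ P ∈ S.filter (fun P => f P = q),
          (1 + N.factorization (f P)) := (Finset.prod_fiberwise_of_maps_to hmaps _).symm
    _ ≤ ∏ q ∈ N.primeFactors, (N.factorization q + 1) ^ n := by
        apply Finset.prod_le_prod'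
        intro q hq
        have : ∏ P ∈ S.filter (fun P => f P = q), (1 + N.factorization (f P))
            = (1 + N.factorization q) ^ (S.filter (fun P => f P = q)).card := by
          rw [← Finset.prod_const]
          exact Finset.prod_congr rfl fun P hP => by rw [(Finset.mem_filter.mp hP).2]
        rw [this, add_comm 1]
        exact Nat.pow_le_pow_right (by omega) (fiber_card q hq)
    _ = (∏ q ∈ N.primeFactors, (N.factorization q + 1)) ^ n := by
        rw [Finset.prod_pow]
    _ = (Nat.divisors N).card ^ n := by rw [Nat.card_divisors hN]
end

section
/- Let K be a non-archimedean local field with ring of integers 𝒪, uniformizer ϖ, and residue field of size q, and let |·| be the normalized absolute value with |ϖ| = q^{-1}. Let α ∈ 𝒪^× with α − 1 ∈ 𝒪^×. If κ = [[a,b],[c,d]] ∈ GL₂(𝒪) and x ∈ K satisfy κ^{-1}·[[1,−x],[0,1]]·[[α,0],[0,1]]·[[1,x],[0,1]]·κ ∈ GL₂(𝒪), then x ∈ 𝒪. -/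
lemma unit_cancel {R K : Type*} [CommRing R] [Field K] [Algebra R K]
    {u : R} (hu : IsUnit u) {y : K}
    (hy : algebraMap R K u * y ∈ (algebraMap R K).range) :
    y ∈ (algebraMap R K).range := by
  obtain ⟨v, rfl⟩ := hu
  have hy2 : y = algebraMap R K ↑v⁻¹ * (algebraMap R K ↑v * y) := by
    rw [← mul_assoc, ← map_mul, Units.inv_mul, map_one, one_mul]
  rw [hy2]
  exact mul_mem ⟨(↑v⁻¹ : R), rfl⟩ hy

theorem hyperbolic_orbital_integral_support (R : Type*) [CommRing R] [IsDomain R]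
    [IsDiscreteValuationRing R]
    (K : Type*) [Field K] [Algebra R K] [IsFractionRing R K]
    (α : Rˣ) (hα : IsUnit ((α : R) - 1))
    (κ : Matrix (Fin 2) (Fin 2) R) (hκ : IsUnit κ.det)
    (x : K)
    (h : ∀ i j, ((κ.map (algebraMap R K))⁻¹ *
          !![1, -x; 0, 1] * !![algebraMap R K (α : R), 0; 0, 1] * !![1, x; 0, 1] *
          κ.map (algebraMap R K)) i j ∈ (algebraMap R K).range) :
    x ∈ (algebraMap R K).range := by
  set f := algebraMap R K with hf
  set κ' := κ.map f with hκ'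
  set M := κ'⁻¹ * !![1, -x; 0, 1] * !![f ↑α, 0; 0, 1] * !![1, x; 0, 1] * κ' with hM
  have hdet : IsUnit κ'.det := by
    rw [hκ', ← RingHom.mapMatrix_apply, ← RingHom.map_det]
    exact hκ.map f
  have hkinv : κ' * κ'⁻¹ = 1 := Matrix.mul_nonsing_inv _ hdet
  have key : κ' * M = !![1, -x; 0, 1] * !![f ↑α, 0; 0, 1] * !![1, x; 0, 1] * κ' := by
    rw [hM]
    simp only [← Matrix.mul_assoc]
    rw [hkinv, Matrix.one_mul]
  have hABC : !![(1:K), -x; 0, 1] * !![f ↑α, 0; 0, 1] * !![1, x; 0, 1]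
      = !![f ↑α, f ↑α * x - x; 0, 1] := by
    rw [Matrix.mul_fin_two, Matrix.mul_fin_two]
    apply Matrix.ext
    intro i j
    fin_cases i <;> fin_cases j <;> simp <;> try ring
  rw [hABC] at key
  have e00 := congrFun (congrFun key 0) 0
  have e01 := congrFun (congrFun key 0) 1
  simp only [Matrix.mul_apply, Fin.sum_univ_two, hκ', Matrix.map_apply] at e00 e01
  norm_num [Matrix.of_apply] at e00 e01
  -- e00 : f (κ 0 0) * M 0 0 + f (κ 0 1) * M 1 0 = f ↑α * f (κ 0 0) + (f ↑α * x - x) * f (κ 1 0)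
  -- e01 : f (κ 0 0) * M 0 1 + f (κ 0 1) * M 1 1 = f ↑α * f (κ 0 1) + (f ↑α * x - x) * f (κ 1 1)
  have hS : ∀ i j, M i j ∈ f.range := h
  have hc : f ((↑α - 1) * κ 1 0) * x ∈ f.range := by
    have : f ((↑α - 1) * κ 1 0) * x = f (κ 0 0) * M 0 0 + f (κ 0 1) * M 1 0 - f ↑α * f (κ 0 0) := by
      simp only [map_mul, map_sub, map_one]
      linear_combination -e00
    rw [this]
    exact sub_mem (add_mem (mul_mem ⟨_, rfl⟩ (hS 0 0)) (mul_mem ⟨_, rfl⟩ (hS 1 0))) (mul_mem ⟨_, rfl⟩ ⟨_, rfl⟩)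
  have hd : f ((↑α - 1) * κ 1 1) * x ∈ f.range := by
    have : f ((↑α - 1) * κ 1 1) * x = f (κ 0 0) * M 0 1 + f (κ 0 1) * M 1 1 - f ↑α * f (κ 0 1) := by
      simp only [map_mul, map_sub, map_one]
      linear_combination -e01
    rw [this]
    exact sub_mem (add_mem (mul_mem ⟨_, rfl⟩ (hS 0 1)) (mul_mem ⟨_, rfl⟩ (hS 1 1))) (mul_mem ⟨_, rfl⟩ ⟨_, rfl⟩)
  have hcd : IsUnit (κ 1 0) ∨ IsUnit (κ 1 1) := by
    by_contra hcon
    push_neg at hcon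
    have h1 : κ 1 0 ∈ IsLocalRing.maximalIdeal R := hcon.1
    have h2 : κ 1 1 ∈ IsLocalRing.maximalIdeal R := hcon.2
    have : κ.det ∈ IsLocalRing.maximalIdeal R := by
      rw [Matrix.det_fin_two]
      exact Ideal.sub_mem _ (Ideal.mul_mem_left _ _ h2) (Ideal.mul_mem_left _ _ h1)
    exact (IsLocalRing.mem_maximalIdeal _).mp this hκ
  rcases hcd with hu | hu
  · exact unit_cancel (hα.mul hu) hc
  · exact unit_cancel (hα.mul hu) hd
end

section
/- Let K be a non-archimedean local field with ring of integers 𝒪, uniformizer ϖ, and let e ≥ 0 be an integer. Let κ = [[a,b],[c,d]] ∈ GL₂(𝒪) and y ∈ K^×. Then the matrix κ^{-1}·[[1,y],[0,1]]·κ lies in Z(K)·K_e, where Z(K) is the group of nonzero scalar matrices and K_e = {[[a,b],[c,d]] ∈ GL₂(𝒪) : ϖ^e ∣ c}, if and only if y ∈ 𝒪 and c²y ∈ ϖ^e𝒪. -/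
theorem unipotent_conjugate_mem_ZKe_iff (R : Type*) [CommRing R] [IsDomain R]
    [IsDiscreteValuationRing R]
    (K : Type*) [Field K] [Algebra R K] [IsFractionRing R K]
    (ϖ : R) (hϖ : Irreducible ϖ) (e : ℕ)
    (κ : Matrix (Fin 2) (Fin 2) R) (hκ : IsUnit κ.det)
    (y : K) (hy : y ≠ 0) :
    (∃ z : K, z ≠ 0 ∧ ∃ A : Matrix (Fin 2) (Fin 2) R, IsUnit A.det ∧ ϖ ^ e ∣ A 1 0 ∧
        (κ.map (algebraMap R K))⁻¹ * !![1, y; 0, 1] * κ.map (algebraMap R K)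
          = z • A.map (algebraMap R K)) ↔
      ((∃ r : R, algebraMap R K r = y) ∧
        ∃ r : R, algebraMap R K (ϖ ^ e * r) = (algebraMap R K (κ 1 0)) ^ 2 * y) := by
  set f := algebraMap R K with hf
  have hinj : Function.Injective f := IsFractionRing.injective R K
  set κK := κ.map f with hκK
  have hdetK : κK.det = f κ.det := by
    rw [hκK, ← RingHom.mapMatrix_apply, ← RingHom.map_det]
  have hκKu : IsUnit κK.det := hdetK ▸ (hκ.map f)
  have hdetne : κK.det ≠ 0 := hκKu.ne_zero
  have hdet2 : κ.det = κ 0 0 * κ 1 1 - κ 0 1 * κ 1 0 := Matrix.det_fin_two κ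
  constructor
  · rintro ⟨z, hz, A, hA, ⟨t, ht⟩, heq⟩
    have hdet1 : (1 : K) = z ^ 2 * f A.det := by
      have h := congrArg Matrix.det heq
      rw [Matrix.det_mul, Matrix.det_mul, Matrix.det_nonsing_inv, Matrix.det_smul,
        ← RingHom.mapMatrix_apply, ← RingHom.map_det, Ring.inverse_eq_inv] at h
      simp only [Matrix.det_fin_two_of, Fintype.card_fin] at h
      rw [← h]
      field_simp
      ring
    have hAdetne : f A.det ≠ 0 := (hA.map f).ne_zero
    -- z is in the image of R
    obtain ⟨w, hw⟩ : ∃ w : R, f w = z := by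
      apply IsIntegrallyClosed.exists_algebraMap_eq_of_isIntegral_pow (n := 2) (by norm_num)
      have hz2 : z ^ 2 = f (↑hA.unit⁻¹ : R) := by
        apply mul_right_cancel₀ hAdetne
        rw [← hdet1, ← map_mul]
        simp
      rw [hz2]
      exact isIntegral_algebraMap
    -- entry equations
    have heq' : κK⁻¹ * (!![1, y; 0, 1] * κK) = z • A.map f := by
      rw [← Matrix.mul_assoc]; exact heq
    have hE : !![1, y; 0, 1] * κK = z • (κK * A.map f) := by
      rw [← Matrix.mul_smul, ← heq', Matrix.mul_nonsing_inv_cancel_left _ _ hκKu]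
    have E00 := congrFun (congrFun hE 0) 0
    have E01 := congrFun (congrFun hE 0) 1
    have E10 := congrFun (congrFun hE 1) 0
    have E11 := congrFun (congrFun hE 1) 1
    simp only [Matrix.mul_apply, Fin.sum_univ_two, Matrix.smul_apply, Matrix.map_apply,
      Matrix.cons_val_zero, Matrix.cons_val_one, Matrix.head_cons, Matrix.head_fin_const,
      smul_eq_mul, Matrix.of_apply, Matrix.cons_val', Matrix.empty_val',
      Matrix.cons_val_fin_one, hκK, ← hw] at E00 E01 E10 E11
    -- lift row-1 equations to R
    have hc10 : κ 1 0 = w * (κ 1 0 * A 0 0 + κ 1 1 * A 1 0) := by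
      apply hinj
      rw [map_mul, map_add, map_mul, map_mul]
      linear_combination E10
    have hyc : y * f (κ 1 0) = f (w * (κ 0 0 * A 0 0 + κ 0 1 * A 1 0) - κ 0 0) := by
      rw [map_sub, map_mul, map_add, map_mul, map_mul]
      linear_combination E00
    have hyd : y * f (κ 1 1) = f (w * (κ 0 0 * A 0 1 + κ 0 1 * A 1 1) - κ 0 1) := by
      rw [map_sub, map_mul, map_add, map_mul, map_mul]
      linear_combination E01
    set p : R := w * (κ 0 0 * A 0 0 + κ 0 1 * A 1 0) - κ 0 0 with hp
    set q : R := w * (κ 0 0 * A 0 1 + κ 0 1 * A 1 1) - κ 0 1 with hq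
    -- at least one of c, d is a unit
    have hcd : IsUnit (κ 1 0) ∨ IsUnit (κ 1 1) := by
      by_contra hcon
      push_neg at hcon
      have h1 : κ 0 1 * κ 1 0 ∈ IsLocalRing.maximalIdeal R :=
        Ideal.mul_mem_left _ _ hcon.1
      have h2 : κ 0 0 * κ 1 1 ∈ IsLocalRing.maximalIdeal R :=
        Ideal.mul_mem_left _ _ hcon.2
      have : κ.det ∈ IsLocalRing.maximalIdeal R := hdet2 ▸ sub_mem h2 h1
      exact (IsLocalRing.maximalIdeal.isMaximal R).ne_top
        (Ideal.eq_top_of_isUnit_mem _ this hκ)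
    constructor
    · rcases hcd with hc | hd
      · refine ⟨p * ↑hc.unit⁻¹, ?_⟩
        have hcne : f (κ 1 0) ≠ 0 := (hc.map f).ne_zero
        have h1 : (↑hc.unit⁻¹ : R) * κ 1 0 = 1 := hc.val_inv_mul
        apply mul_right_cancel₀ hcne
        rw [← map_mul, mul_assoc, h1, mul_one]
        exact hyc.symm
      · refine ⟨q * ↑hd.unit⁻¹, ?_⟩
        have hdne : f (κ 1 1) ≠ 0 := (hd.map f).ne_zero
        have h1 : (↑hd.unit⁻¹ : R) * κ 1 1 = 1 := hd.val_inv_mul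
        apply mul_right_cancel₀ hdne
        rw [← map_mul, mul_assoc, h1, mul_one]
        exact hyd.symm
    · refine ⟨-(w * t * κ.det), ?_⟩
      have key : ϖ ^ e * -(w * t * κ.det) = κ 1 0 * p := by
        rw [hp]
        linear_combination (κ 0 0) * hc10 +
          (w * (κ 0 0 * κ 1 1 - κ 0 1 * κ 1 0)) * ht - (ϖ ^ e * w * t) * hdet2
      rw [key, map_mul, ← hyc]
      ring
  · rintro ⟨⟨r, hr⟩, s, hs⟩
    -- lift the divisibility relation to R
    have hsR : ϖ ^ e * s = κ 1 0 ^ 2 * r := by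
      apply hinj
      rw [hs, map_mul, map_pow, hr]
    have hκu : IsUnit κ := (Matrix.isUnit_iff_isUnit_det κ).mpr hκ
    refine ⟨1, one_ne_zero, κ⁻¹ * !![1, r; 0, 1] * κ, ?_, ?_, ?_⟩
    · have hd1 : (κ⁻¹ * !![1, r; 0, 1] * κ).det = 1 := by
        rw [Matrix.det_mul, Matrix.det_mul, Matrix.det_nonsing_inv]
        simp only [Matrix.det_fin_two_of, one_mul, mul_zero, sub_zero, mul_one]
        exact Ring.inverse_mul_cancel _ hκ
      rw [hd1]
      exact isUnit_one
    · have hentry : (κ⁻¹ * !![1, r; 0, 1] * κ) 1 0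
          = Ring.inverse κ.det * (-(κ 1 0 ^ 2) * r) := by
        rw [Matrix.inv_def, Matrix.adjugate_fin_two]
        simp only [Matrix.mul_apply, Fin.sum_univ_two, Matrix.smul_apply,
          Matrix.cons_val_zero, Matrix.cons_val_one, Matrix.head_cons,
          Matrix.head_fin_const, smul_eq_mul, Matrix.of_apply, Matrix.cons_val',
          Matrix.empty_val', Matrix.cons_val_fin_one]
        ring
      refine ⟨Ring.inverse κ.det * (-s), ?_⟩
      rw [hentry]
      linear_combination Ring.inverse κ.det * hsR
    · have hmul : κ * (κ⁻¹ * !![1, r; 0, 1] * κ) = !![1, r; 0, 1] * κ := by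
        rw [Matrix.mul_assoc κ⁻¹, Matrix.mul_nonsing_inv_cancel_left _ _ hκ]
      have hmapU : (!![1, r; 0, 1] : Matrix (Fin 2) (Fin 2) R).map f
          = !![1, y; 0, 1] := by
        ext i j
        fin_cases i <;> fin_cases j <;>
          simp [Matrix.map_apply, hr]
      have hAmap : κK * ((κ⁻¹ * !![1, r; 0, 1] * κ).map f) = !![1, y; 0, 1] * κK := by
        rw [hκK, ← Matrix.map_mul, hmul, Matrix.map_mul, hmapU]
      rw [one_smul, Matrix.mul_assoc, ← hAmap,
        Matrix.nonsing_inv_mul_cancel_left _ _ hκKu]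
end

section
/- Let 𝒪 be the ring of integers of a non-archimedean local field with uniformizer ϖ, residue field of size q and odd residue characteristic. Let m ∈ 𝒪, u ∈ 𝒪^×, set f := v(m² − 4u) (the ϖ-adic valuation, possibly 0). Then for every integer α ≥ 1, the number of solutions t ∈ 𝒪/ϖ^α𝒪 of t² − mt + u = 0 is at most 4·q^{f/2}. -/
private lemma aux_unit_pow_dvd {R : Type*} [CommRing R] [IsDomain R]
    {ϖ : R} (hϖ : Irreducible ϖ) {v : R} (hv : IsUnit v) (n k : ℕ) :
    ϖ ^ k ∣ v * ϖ ^ n ↔ k ≤ n := by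
  constructor
  · intro h
    by_contra hk
    push_neg at hk
    have h1 : ϖ ^ n * ϖ ∣ ϖ ^ n * v := by
      calc ϖ ^ n * ϖ = ϖ ^ (n + 1) := by ring
        _ ∣ ϖ ^ k := pow_dvd_pow _ hk
        _ ∣ v * ϖ ^ n := h
        _ = ϖ ^ n * v := by ring
    have := (mul_dvd_mul_iff_left (pow_ne_zero n hϖ.ne_zero)).mp h1
    exact hϖ.not_isUnit (isUnit_of_dvd_unit this hv)
  · intro h
    exact Dvd.dvd.mul_left (pow_dvd_pow _ h) v

private lemma aux_card_pow (R : Type*) [CommRing R] [IsDomain R] [IsDiscreteValuationRing R]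
    (ϖ : R) (hϖ : Irreducible ϖ) (n : ℕ) :
    Nat.card (R ⧸ Ideal.span {ϖ ^ n}) = Nat.card (R ⧸ Ideal.span {ϖ}) ^ n := by
  haveI hP : (Ideal.span {ϖ}).IsPrime := (Ideal.span_singleton_prime hϖ.ne_zero).mpr hϖ.prime
  have hbot : Ideal.span {ϖ} ≠ ⊥ := by
    simp [Ideal.span_singleton_eq_bot, hϖ.ne_zero]
  rw [← Ideal.span_singleton_pow, ← Submodule.cardQuot_apply, ← Submodule.cardQuot_apply,
    cardQuot_pow_of_prime hbot]

private lemma aux_finite_pow (R : Type*) [CommRing R] [IsDomain R] [IsDiscreteValuationRing R]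
    (ϖ : R) (hϖ : Irreducible ϖ) (hfin : Finite (R ⧸ Ideal.span {ϖ})) (n : ℕ) :
    Finite (R ⧸ Ideal.span {ϖ ^ n}) := by
  haveI := hfin
  have h0 : 0 < Nat.card (R ⧸ Ideal.span {ϖ}) := Nat.card_pos
  have : 0 < Nat.card (R ⧸ Ideal.span {ϖ ^ n}) := by
    rw [aux_card_pow R ϖ hϖ n]; positivity
  exact (Nat.card_pos_iff.mp this).2

theorem card_quadratic_roots_mod_pow_le (R : Type*) [CommRing R] [IsDomain R]
    [IsDiscreteValuationRing R]
    (ϖ : R) (hϖ : Irreducible ϖ)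
    (hfin : Finite (R ⧸ Ideal.span {ϖ}))
    (h2 : IsUnit (2 : R))
    (m u : R) (hu : IsUnit u)
    (f : ℕ) (hf : ∃ w : Rˣ, m ^ 2 - 4 * u = ϖ ^ f * (w : R))
    (α : ℕ) (hα : 1 ≤ α) :
    (Nat.card {t : R ⧸ Ideal.span {ϖ ^ α} //
        t ^ 2 - (Ideal.Quotient.mk (Ideal.span {ϖ ^ α}) m) * t
          + Ideal.Quotient.mk (Ideal.span {ϖ ^ α}) u = 0} : ℝ)
      ≤ 4 * (Nat.card (R ⧸ Ideal.span {ϖ}) : ℝ) ^ ((f : ℝ) / 2) := by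
  classical
  haveI := hfin
  have hq1 : 1 ≤ Nat.card (R ⧸ Ideal.span {ϖ}) := Nat.card_pos
  have hqR : (1 : ℝ) ≤ (Nat.card (R ⧸ Ideal.span {ϖ}) : ℝ) := by exact_mod_cast hq1
  have hRHS0 : 0 ≤ 4 * (Nat.card (R ⧸ Ideal.span {ϖ}) : ℝ) ^ ((f : ℝ) / 2) := by positivity
  obtain ⟨w, hw⟩ := hf
  set j : R := ↑h2.unit⁻¹ with hj
  have hj2 : (2 : R) * j = 1 := h2.mul_val_inv
  set c : R := (m ^ 2 - 4 * u) * j ^ 2 with hc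
  set w' : R := ↑w * j ^ 2 with hw'def
  have hcw : c = ϖ ^ f * w' := by rw [hc, hw, hw'def]; ring
  have hwu : IsUnit w' := w.isUnit.mul ((h2.unit⁻¹.isUnit).pow 2)
  have hwnd : ¬ ϖ ∣ w' := fun hd => hϖ.not_isUnit (isUnit_of_dvd_unit hd hwu)
  have hcancel : ∀ (k l : ℕ) (z : R), k ≤ l → ϖ ^ l ∣ ϖ ^ k * z → ϖ ^ (l - k) ∣ z := by
    intro k l z hkl hdvd
    have h1 : ϖ ^ k * ϖ ^ (l - k) ∣ ϖ ^ k * z := by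
      rw [← pow_add, Nat.add_sub_cancel' hkl]; exact hdvd
    exact (mul_dvd_mul_iff_left (pow_ne_zero k hϖ.ne_zero)).mp h1
  have hcf : ¬ ϖ ^ (f + 1) ∣ c := by
    intro h8
    rw [hcw] at h8
    have := hcancel f (f + 1) w' (by omega) (by rwa [pow_succ] at h8 ⊢)
    rw [Nat.add_sub_cancel_left, pow_one] at this
    exact hwnd this
  set Iα := Ideal.span {ϖ ^ α} with hIα
  set mk := Ideal.Quotient.mk Iα with hmk
  -- complete the square
  have hid : ∀ t : R ⧸ Iα, (t - mk (m * j)) ^ 2 - mk c = t ^ 2 - mk m * t + mk u := by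
    intro t
    have h1 : mk 2 * mk j = 1 := by rw [← map_mul, hj2, map_one]
    have hcm : mk c = (mk m ^ 2 - 4 * mk u) * mk j ^ 2 := by
      rw [hc]; push_cast [map_mul, map_sub, map_pow, map_ofNat]; ring
    have hmj : mk (m * j) = mk m * mk j := map_mul _ _ _
    rw [hcm, hmj]
    have h2' : (2 : R ⧸ Iα) * mk j = 1 := by
      have : ((2 : R ⧸ Iα)) = mk 2 := by push_cast [map_ofNat]; rfl
      rw [this]; exact h1
    linear_combination ((2 * mk j + 1) * mk u - mk m * t) * h2'
  have hcard : Nat.card {t : R ⧸ Iα // t ^ 2 - mk m * t + mk u = 0}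
      = Nat.card {x : R ⧸ Iα // x ^ 2 = mk c} := by
    apply Nat.card_congr
    refine Equiv.subtypeEquiv (Equiv.subRight (mk (m * j))) (fun t => ?_)
    rw [Equiv.subRight_apply, ← hid t, sub_eq_zero]
  rw [hcard]
  rcases Nat.eq_zero_or_pos
      (Nat.card {x : R ⧸ Iα // x ^ 2 = mk c}) with h0 | hpos
  · rw [h0]; simpa using hRHS0
  obtain ⟨x₀⟩ := (Nat.card_pos_iff.mp hpos).1
  have hlift : ∀ x : {x : R ⧸ Iα // x ^ 2 = mk c},
      ∃ a : R, mk a = ↑x ∧ ϖ ^ α ∣ a ^ 2 - c := by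
    intro x
    obtain ⟨a, ha⟩ := Ideal.Quotient.mk_surjective (x : R ⧸ Iα)
    refine ⟨a, ha, ?_⟩
    have hz : mk (a ^ 2 - c) = 0 := by rw [map_sub, map_pow, ha, x.2, sub_self]
    rwa [Ideal.Quotient.eq_zero_iff_mem, hIα, Ideal.mem_span_singleton] at hz
  choose A hA1 hA2 using hlift
  -- the exponent e and the dichotomy
  have hmain : ∃ e : ℕ, e ≤ α ∧ 2 * e ≤ f ∧ ∀ a b : R, ϖ ^ α ∣ a ^ 2 - c → ϖ ^ α ∣ b ^ 2 - c →
      (ϖ ^ (α - e) ∣ a - b ∨ ϖ ^ (α - e) ∣ a + b) := by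
    have main : ∀ e : ℕ, (α ≤ f ∧ e = α / 2 ∨ f < α ∧ f = 2 * e) →
        ∀ a b : R, ϖ ^ α ∣ a ^ 2 - c → ϖ ^ α ∣ b ^ 2 - c →
        (ϖ ^ (α - e) ∣ a - b ∨ ϖ ^ (α - e) ∣ a + b) := by
      intro e hecase a b hda hdb
      by_cases h1 : ϖ ^ (α - e) ∣ a - b
      · exact Or.inl h1
      have hab : a - b ≠ 0 := fun h => h1 (h ▸ dvd_zero _)
      obtain ⟨n₁, v, hv⟩ := IsDiscreteValuationRing.eq_unit_mul_pow_irreducible hab hϖ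
      have hn₁lt : n₁ < α - e := by
        by_contra hh
        push_neg at hh
        exact h1 (dvd_trans (pow_dvd_pow _ hh) (hv ▸ dvd_mul_left _ _))
      have hprod : ϖ ^ α ∣ ϖ ^ n₁ * (↑v * (a + b)) := by
        have heq : ϖ ^ n₁ * (↑v * (a + b)) = (a ^ 2 - c) - (b ^ 2 - c) := by
          have : (a - b) * (a + b) = (a ^ 2 - c) - (b ^ 2 - c) := by ring
          rw [← this, hv]; ring
        rw [heq]; exact dvd_sub hda hdb
      have hsum : ϖ ^ (α - n₁) ∣ a + b := by
        have hmul := hcancel n₁ α (↑v * (a + b)) (by omega) hprod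
        have := hmul.mul_left ↑v⁻¹
        rwa [← mul_assoc, Units.inv_mul, one_mul] at this
      by_cases hne : n₁ ≤ e
      · exact Or.inr (dvd_trans (pow_dvd_pow _ (by omega)) hsum)
      push_neg at hne
      exfalso
      rcases hecase with ⟨hαf, he⟩ | ⟨hfα, he⟩
      · omega
      · -- f < α, f = 2 e
        have h3 : ϖ ^ (e + 1) ∣ a + b := dvd_trans (pow_dvd_pow _ (by omega)) hsum
        have h4 : ϖ ^ (e + 1) ∣ a - b :=
          dvd_trans (pow_dvd_pow _ (by omega)) (hv ▸ dvd_mul_left _ _)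
        have h5 : ϖ ^ (e + 1) ∣ 2 * a := by
          have heq : 2 * a = (a + b) + (a - b) := by ring
          rw [heq]; exact dvd_add h3 h4
        have h6 : ϖ ^ (e + 1) ∣ a := by
          have := h5.mul_left j
          rwa [show j * (2 * a) = a from by linear_combination a * hj2] at this
        have h7 : ϖ ^ (2 * e + 2) ∣ a ^ 2 := by
          have heq : a ^ 2 = a * a := sq a
          have heq2 : ϖ ^ (2 * e + 2) = ϖ ^ (e + 1) * ϖ ^ (e + 1) := by
            rw [← pow_add]; congr 1; omega
          rw [heq, heq2]; exact mul_dvd_mul h6 h6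
        have h8 : ϖ ^ (f + 1) ∣ c := by
          have heq : c = a ^ 2 - (a ^ 2 - c) := by ring
          rw [heq]
          exact dvd_sub (dvd_trans (pow_dvd_pow _ (by omega)) h7)
            (dvd_trans (pow_dvd_pow _ (by omega)) hda)
        exact hcf h8
    by_cases hfα : α ≤ f
    · exact ⟨α / 2, by omega, by omega, main (α / 2) (Or.inl ⟨hfα, rfl⟩)⟩
    · push_neg at hfα
      -- f is even, via the solution x₀
      have ha₀ := hA2 x₀
      have ha₀0 : A x₀ ≠ 0 := by
        intro h
        apply hcf
        have : ϖ ^ α ∣ c := by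
          have := (dvd_neg).mpr ha₀
          rw [h] at this; simpa using this
        exact dvd_trans (pow_dvd_pow _ (by omega)) this
      obtain ⟨n₀, v₀, hv₀⟩ := IsDiscreteValuationRing.eq_unit_mul_pow_irreducible ha₀0 hϖ
      have hsq : (A x₀) ^ 2 = (↑v₀ : R) ^ 2 * ϖ ^ (2 * n₀) := by rw [hv₀]; ring
      have hfle : f ≤ 2 * n₀ := by
        have hd : ϖ ^ f ∣ (A x₀) ^ 2 := by
          have heq : (A x₀) ^ 2 = ((A x₀) ^ 2 - c) + c := by ring
          rw [heq]
          exact dvd_add (dvd_trans (pow_dvd_pow _ (by omega)) ha₀)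
            (hcw ▸ dvd_mul_right _ _)
        rw [hsq] at hd
        exact (aux_unit_pow_dvd hϖ (v₀.isUnit.pow 2) (2 * n₀) f).mp hd
      have hflt : ¬ (f + 1 ≤ 2 * n₀) := by
        intro hle
        apply hcf
        have hd : ϖ ^ (f + 1) ∣ (A x₀) ^ 2 := by
          rw [hsq]
          exact (aux_unit_pow_dvd hϖ (v₀.isUnit.pow 2) (2 * n₀) (f + 1)).mpr hle
        have heq : c = (A x₀) ^ 2 - ((A x₀) ^ 2 - c) := by ring
        rw [heq]
        exact dvd_sub hd (dvd_trans (pow_dvd_pow _ (by omega)) ha₀)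
      have hfeq : f = 2 * n₀ := by omega
      exact ⟨n₀, by omega, by omega, main n₀ (Or.inr ⟨hfα, hfeq⟩)⟩
  obtain ⟨e, heα, h2e, P1⟩ := hmain
  haveI finE : Finite (R ⧸ Ideal.span {ϖ ^ e}) := aux_finite_pow R ϖ hϖ hfin e
  set mkE := Ideal.Quotient.mk (Ideal.span {ϖ ^ e}) with hmkE
  set a₀ : R := A x₀ with ha₀def
  have key : ∀ x, ¬ ϖ ^ (α - e) ∣ A x - a₀ → ϖ ^ (α - e) ∣ A x + a₀ :=
    fun x h => (P1 (A x) a₀ (hA2 x) (hA2 x₀)).resolve_left h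
  have glue : ∀ (s : R) (x y : {x : R ⧸ Iα // x ^ 2 = mk c}) (rx ry : R),
      A x - s = ϖ ^ (α - e) * rx → A y - s = ϖ ^ (α - e) * ry → mkE rx = mkE ry → x = y := by
    intro s x y rx ry hx' hy' hmkeq
    have hdvd : ϖ ^ e ∣ rx - ry := by
      have := Ideal.Quotient.eq.mp hmkeq
      rwa [Ideal.mem_span_singleton] at this
    obtain ⟨d, hd⟩ := hdvd
    have hxy : ϖ ^ α ∣ A x - A y := by
      refine ⟨d, ?_⟩
      have heq : A x - A y = ϖ ^ (α - e) * (rx - ry) := by linear_combination hx' - hy'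
      rw [heq, hd, ← mul_assoc, ← pow_add]
      congr 2
      omega
    apply Subtype.ext
    rw [← hA1 x, ← hA1 y]
    exact Ideal.Quotient.eq.mpr (by rwa [hIα, Ideal.mem_span_singleton])
  have hinj : Function.Injective (fun x : {x : R ⧸ Iα // x ^ 2 = mk c} =>
      if h : ϖ ^ (α - e) ∣ A x - a₀ then ((true, mkE h.choose) : Bool × (R ⧸ Ideal.span {ϖ ^ e}))
      else (false, mkE (key x h).choose)) := by
    intro x y hxy
    dsimp only at hxy
    by_cases h1 : ϖ ^ (α - e) ∣ A x - a₀ <;> by_cases h2 : ϖ ^ (α - e) ∣ A y - a₀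
    · rw [dif_pos h1, dif_pos h2, Prod.mk.injEq] at hxy
      exact glue a₀ x y _ _ h1.choose_spec h2.choose_spec hxy.2
    · rw [dif_pos h1, dif_neg h2, Prod.mk.injEq] at hxy
      simp at hxy
    · rw [dif_neg h1, dif_pos h2, Prod.mk.injEq] at hxy
      simp at hxy
    · rw [dif_neg h1, dif_neg h2, Prod.mk.injEq] at hxy
      refine glue (-a₀) x y _ _ ?_ ?_ hxy.2
      · rw [sub_neg_eq_add]; exact (key x h1).choose_spec
      · rw [sub_neg_eq_add]; exact (key y h2).choose_spec
  have hle : Nat.card {x : R ⧸ Iα // x ^ 2 = mk c}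
      ≤ 2 * Nat.card (R ⧸ Ideal.span {ϖ}) ^ e := by
    have h := Nat.card_le_card_of_injective _ hinj
    rwa [Nat.card_prod, aux_card_pow R ϖ hϖ e, show Nat.card Bool = 2 from by simp] at h
  -- final real arithmetic
  have heR : ((e : ℕ) : ℝ) ≤ (f : ℝ) / 2 := by
    have : (2 * e : ℕ) ≤ (f : ℕ) := h2e
    have := (Nat.cast_le (α := ℝ)).mpr this
    push_cast at this ⊢
    linarith
  calc (Nat.card {x : R ⧸ Iα // x ^ 2 = mk c} : ℝ)
      ≤ ((2 * Nat.card (R ⧸ Ideal.span {ϖ}) ^ e : ℕ) : ℝ) := by exact_mod_cast hle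
    _ = 2 * ((Nat.card (R ⧸ Ideal.span {ϖ}) : ℝ) ^ ((e : ℕ) : ℝ)) := by
        rw [Real.rpow_natCast]; push_cast; ring
    _ ≤ 4 * (Nat.card (R ⧸ Ideal.span {ϖ}) : ℝ) ^ ((f : ℝ) / 2) := by
        have h1 := Real.rpow_le_rpow_of_exponent_le hqR heR
        have h0 : (0:ℝ) ≤ (Nat.card (R ⧸ Ideal.span {ϖ}) : ℝ) ^ (((e : ℕ) : ℝ)) :=
          Real.rpow_nonneg (by positivity) _
        nlinarith [h1, h0]
end
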